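/- Let m ∈ (0,1), β > 1, r > 0. Suppose ψ₁, ψ₂ : I → (0,∞) are C², decreasing, and are respectively a subsolution and a supersolution of the self-similar ODE on the interval I. If ψ₁(z₁) = ψ₂(z₁) and ψ₁'(z₁) > ψ₂'(z₁) at some z₁ ∈ I, then ψ₁(z) > ψ₂(z) for all z ∈ (z₁, ∞) ∩ I. -/

import Mathlib

open Real Set Filter Topology

section helpers
variable {ψ : ℝ → ℝ}

private lemma deriv_nonpos_aux {x b : ℝ} (hd : DifferentiableAt ℝ ψ x)
    (hxb : x < b) (hanti : ∀ y ∈ Ioc x b, ψ y < ψ x) : deriv ψ x ≤ 0 := by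
  have hslope : Tendsto (slope ψ x) (𝓝[>] x) (𝓝 (deriv ψ x)) :=
    (hasDerivAt_iff_tendsto_slope.mp hd.hasDerivAt).mono_left
      (nhdsWithin_mono x (fun y hy => ne_of_gt hy))
  refine le_of_tendsto hslope ?_
  filter_upwards [Ioo_mem_nhdsGT_of_mem (Set.left_mem_Ico.mpr hxb)] with y hy
  have h1 : ψ y < ψ x := hanti y ⟨hy.1, le_of_lt hy.2⟩
  have h2 : 0 < y - x := sub_pos.mpr hy.1
  rw [slope_def_field]
  exact div_nonpos_of_nonpos_of_nonneg (by linarith) (le_of_lt h2)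

private lemma exists_gt_right {w : ℝ → ℝ} {x b d : ℝ} (hd : HasDerivAt w d x) (h0 : w x = 0)
    (hdpos : 0 < d) (hxb : x < b) : ∃ y, y ∈ Ioo x b ∧ 0 < w y := by
  have hslope : Tendsto (slope w x) (𝓝[>] x) (𝓝 d) :=
    (hasDerivAt_iff_tendsto_slope.mp hd).mono_left
      (nhdsWithin_mono x (fun y hy => ne_of_gt hy))
  have hev : ∀ᶠ y in 𝓝[>] x, 0 < slope w x y := hslope.eventually (eventually_gt_nhds hdpos)
  have hev2 : ∀ᶠ y in 𝓝[>] x, y ∈ Ioo x b := Ioo_mem_nhdsGT_of_mem (Set.left_mem_Ico.mpr hxb)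
  obtain ⟨y, hy1, hy2⟩ := (hev.and hev2).exists
  refine ⟨y, hy2, ?_⟩
  rw [slope_def_field, h0, sub_zero] at hy1
  have h2 : 0 < y - x := sub_pos.mpr hy2.1
  have := mul_pos hy1 h2
  rwa [div_mul_cancel₀] at this
  exact ne_of_gt h2

private lemma mvt_rpow_lower {p x y Mb : ℝ} (hp0 : 0 < p) (hp1 : p ≤ 1) (hx : 0 < x) (hxy : x ≤ y)
    (hyM : y ≤ Mb) : p * Mb ^ (p - 1) * (y - x) ≤ y ^ p - x ^ p := by
  rcases eq_or_lt_of_le hxy with h | h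
  · subst h; simp
  · obtain ⟨c, hc, hceq⟩ := exists_hasDerivAt_eq_slope (fun t => t ^ p)
      (fun t => p * t ^ (p - 1)) h
      (fun t ht => (Real.continuousAt_rpow_const t p
        (Or.inl (ne_of_gt (lt_of_lt_of_le hx ht.1)))).continuousWithinAt)
      (fun t ht => Real.hasDerivAt_rpow_const (Or.inl (ne_of_gt (lt_of_lt_of_le hx (le_of_lt ht.1)))))
    have hc0 : 0 < c := lt_of_lt_of_le hx (le_of_lt hc.1)
    have hcM : c ≤ Mb := le_trans (le_of_lt hc.2) hyM
    have hpow : Mb ^ (p - 1) ≤ c ^ (p - 1) :=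
      Real.rpow_le_rpow_of_nonpos hc0 hcM (by linarith)
    have hyx : 0 < y - x := sub_pos.mpr h
    have : p * Mb ^ (p - 1) ≤ (y ^ p - x ^ p) / (y - x) := by
      rw [← hceq]
      exact mul_le_mul_of_nonneg_left hpow (le_of_lt hp0)
    calc p * Mb ^ (p - 1) * (y - x) ≤ ((y ^ p - x ^ p) / (y - x)) * (y - x) :=
          mul_le_mul_of_nonneg_right this (le_of_lt hyx)
      _ = y ^ p - x ^ p := div_mul_cancel₀ _ (ne_of_gt hyx)

private lemma mvt_rpow_upper {p x y d : ℝ} (hp0 : 0 ≤ p) (hp1 : p ≤ 1) (hd : 0 < d)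
    (hdx : d ≤ x) (hxy : x ≤ y) : y ^ p - x ^ p ≤ p * d ^ (p - 1) * (y - x) := by
  rcases eq_or_lt_of_le hxy with h | h
  · subst h; simp
  · have hx : 0 < x := lt_of_lt_of_le hd hdx
    obtain ⟨c, hc, hceq⟩ := exists_hasDerivAt_eq_slope (fun t => t ^ p)
      (fun t => p * t ^ (p - 1)) h
      (fun t ht => (Real.continuousAt_rpow_const t p
        (Or.inl (ne_of_gt (lt_of_lt_of_le hx ht.1)))).continuousWithinAt)
      (fun t ht => Real.hasDerivAt_rpow_const (Or.inl (ne_of_gt (lt_of_lt_of_le hx (le_of_lt ht.1)))))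
    have hc0 : 0 < c := lt_of_lt_of_le hx (le_of_lt hc.1)
    have hdc : d ≤ c := le_trans hdx (le_of_lt hc.1)
    have hpow : c ^ (p - 1) ≤ d ^ (p - 1) :=
      Real.rpow_le_rpow_of_nonpos hd hdc (by linarith)
    have hyx : 0 < y - x := sub_pos.mpr h
    have h2 : (y ^ p - x ^ p) / (y - x) ≤ p * d ^ (p - 1) := by
      rw [← hceq]
      exact mul_le_mul_of_nonneg_left hpow hp0
    calc y ^ p - x ^ p = ((y ^ p - x ^ p) / (y - x)) * (y - x) :=
          (div_mul_cancel₀ _ (ne_of_gt hyx)).symm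
      _ ≤ p * d ^ (p - 1) * (y - x) := mul_le_mul_of_nonneg_right h2 (le_of_lt hyx)

private lemma hopf_lemma {K δ : ℝ} (hK : 0 ≤ K) (hδ : 0 < δ)
    {u u' u'' : ℝ → ℝ}
    (hd1 : ∀ s ∈ Icc (0:ℝ) δ, HasDerivAt u (u' s) s)
    (hd2 : ∀ s ∈ Icc (0:ℝ) δ, HasDerivAt u' (u'' s) s)
    (hnn : ∀ s ∈ Icc (0:ℝ) δ, 0 ≤ u s)
    (h0 : u 0 = 0) (h0' : u' 0 = 0)
    (hineq : ∀ s ∈ Icc (0:ℝ) δ, u'' s ≤ K * (u s + |u' s|)) :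
    ∃ s₀, 0 < s₀ ∧ ∀ s ∈ Icc (0:ℝ) s₀, u s = 0 := by
  set s₀ := min δ (1/(2*K+2)) with hs₀def
  have hKpos : (0:ℝ) < 2*K+2 := by linarith
  have hs₀pos : 0 < s₀ := lt_min hδ (by positivity)
  have hs₀δ : s₀ ≤ δ := min_le_left _ _
  have hs₀le : s₀ ≤ 1/(2*K+2) := min_le_right _ _
  have hs₀1 : s₀ ≤ 1 := le_trans hs₀le (by rw [div_le_one hKpos]; linarith)
  have hsub : Icc (0:ℝ) s₀ ⊆ Icc 0 δ := Icc_subset_Icc le_rfl hs₀δ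
  refine ⟨s₀, hs₀pos, ?_⟩
  have hcu : ContinuousOn u (Icc 0 s₀) := fun s hs =>
    ((hd1 s (hsub hs)).continuousAt).continuousWithinAt
  have hcu' : ContinuousOn u' (Icc 0 s₀) := fun s hs =>
    ((hd2 s (hsub hs)).continuousAt).continuousWithinAt
  obtain ⟨σ, hσmem, hσmax⟩ := isCompact_Icc.exists_isMaxOn (nonempty_Icc.mpr (le_of_lt hs₀pos)) hcu'
  set B := u' σ with hBdef
  have hB0 : 0 ≤ B := by
    have := hσmax (left_mem_Icc.mpr (le_of_lt hs₀pos))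
    simpa [h0'] using this
  have hBound1 : ∀ s ∈ Icc (0:ℝ) s₀, u s ≤ B * s := by
    have hanti : AntitoneOn (fun s => u s - B * s) (Icc 0 s₀) := by
      apply antitoneOn_of_deriv_nonpos (convex_Icc _ _)
      · exact hcu.sub (continuousOn_const.mul continuousOn_id)
      · intro x hx
        rw [interior_Icc] at hx
        exact ((hd1 x (hsub ⟨le_of_lt hx.1, le_of_lt hx.2⟩)).sub
          ((hasDerivAt_id x).const_mul B)).differentiableAt.differentiableWithinAt
      · intro x hx
        rw [interior_Icc] at hx
        have hder : HasDerivAt (fun s => u s - B * s) (u' x - B) x := by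
          exact ((hd1 x (hsub ⟨le_of_lt hx.1, le_of_lt hx.2⟩)).sub
            ((hasDerivAt_id x).const_mul B)).congr_deriv (by simp)
        rw [hder.deriv]
        have : u' x ≤ B := hσmax ⟨le_of_lt hx.1, le_of_lt hx.2⟩
        simpa using by linarith
    intro s hs
    have := hanti (left_mem_Icc.mpr (le_of_lt hs₀pos)) hs hs.1
    simp only [h0, mul_zero, sub_zero] at this
    linarith
  have hBle : B ≤ 0 := by
    by_contra hBpos
    push_neg at hBpos
    set A := B * s₀ with hAdef
    have hA0 : 0 ≤ A := mul_nonneg hB0 (le_of_lt hs₀pos)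
    set S := {s ∈ Icc (0:ℝ) σ | u' s ≤ 0} with hSdef
    have hS0 : (0:ℝ) ∈ S := ⟨left_mem_Icc.mpr hσmem.1, le_of_eq h0'⟩
    have hSne : S.Nonempty := ⟨0, hS0⟩
    have hSbdd : BddAbove S := ⟨σ, fun x hx => hx.1.2⟩
    set τ := sSup S with hτdef
    have hτmem : τ ∈ Icc (0:ℝ) σ := ⟨le_csSup hSbdd hS0, csSup_le hSne (fun x hx => hx.1.2)⟩
    have hτs₀ : τ ∈ Icc (0:ℝ) s₀ := ⟨hτmem.1, le_trans hτmem.2 hσmem.2⟩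
    have hτnonpos : u' τ ≤ 0 := by
      by_contra hpos
      push_neg at hpos
      have hcont : ContinuousAt u' τ := (hd2 τ (hsub hτs₀)).continuousAt
      have hev : ∀ᶠ x in 𝓝 τ, 0 < u' x := hcont.eventually (eventually_gt_nhds hpos)
      rw [Metric.eventually_nhds_iff] at hev
      obtain ⟨ε, hε, hball⟩ := hev
      obtain ⟨b, hbS, hbτ⟩ := exists_lt_of_lt_csSup hSne (show τ - ε < τ by linarith)
      have hb2 : b ≤ τ := le_csSup hSbdd hbS
      have : 0 < u' b := hball (by rw [Real.dist_eq, abs_lt]; constructor <;> linarith)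
      linarith [hbS.2]
    have hτσ : τ < σ := by
      rcases eq_or_lt_of_le hτmem.2 with h | h
      · exfalso; rw [h] at hτnonpos; linarith
      · exact h
    have hgt : ∀ x ∈ Ioc τ σ, 0 < u' x := by
      intro x hx
      by_contra hle
      push_neg at hle
      have : x ∈ S := ⟨⟨le_trans hτmem.1 (le_of_lt hx.1), hx.2⟩, hle⟩
      have : x ≤ τ := le_csSup hSbdd this
      linarith [hx.1]
    have hanti2 : AntitoneOn (fun s => u' s - K*(A+B)*s) (Icc τ σ) := by
      apply antitoneOn_of_deriv_nonpos (convex_Icc _ _)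
      · exact (hcu'.mono (Icc_subset_Icc hτmem.1 hσmem.2)).sub
          (continuousOn_const.mul continuousOn_id)
      · intro x hx
        rw [interior_Icc] at hx
        have hxmem : x ∈ Icc (0:ℝ) s₀ :=
          ⟨le_trans hτmem.1 (le_of_lt hx.1), le_trans (le_of_lt hx.2) hσmem.2⟩
        exact ((hd2 x (hsub hxmem)).sub
          ((hasDerivAt_id x).const_mul (K*(A+B)))).differentiableAt.differentiableWithinAt
      · intro x hx
        rw [interior_Icc] at hx
        have hxmem : x ∈ Icc (0:ℝ) s₀ :=
          ⟨le_trans hτmem.1 (le_of_lt hx.1), le_trans (le_of_lt hx.2) hσmem.2⟩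
        have hder : HasDerivAt (fun s => u' s - K*(A+B)*s) (u'' x - K*(A+B)) x := by
          exact ((hd2 x (hsub hxmem)).sub ((hasDerivAt_id x).const_mul (K*(A+B)))).congr_deriv (by simp)
        rw [hder.deriv]
        have h1 : u'' x ≤ K * (u x + |u' x|) := hineq x (hsub hxmem)
        have h2 : 0 < u' x := hgt x ⟨hx.1, le_of_lt hx.2⟩
        have h3 : u' x ≤ B := hσmax hxmem
        have h4 : u x ≤ A := by
          have hb := hBound1 x hxmem
          have hxs : x ≤ s₀ := hxmem.2
          nlinarith
        rw [abs_of_pos h2] at h1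
        have : u'' x ≤ K * (A + B) := le_trans h1 (by nlinarith)
        simpa using by linarith
    have hfin := hanti2 (left_mem_Icc.mpr (le_of_lt hτσ)) (right_mem_Icc.mpr (le_of_lt hτσ))
      (le_of_lt hτσ)
    simp only at hfin
    have hστ : σ - τ ≤ s₀ := by
      have := hτmem.1; have := hσmem.2; linarith
    have hKAB : 0 ≤ K * (A+B) := mul_nonneg hK (by linarith)
    have hBB : B ≤ K*(A+B)*s₀ := by nlinarith [hτnonpos]
    have hcon : K*(A+B)*s₀ < B := by
      have e1 : K * s₀ ≤ K * (1/(2*K+2)) := mul_le_mul_of_nonneg_left hs₀le hK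
      have e2 : K * (1/(2*K+2)) < 1/2 := by
        rw [mul_one_div, div_lt_div_iff₀ hKpos (by norm_num : (0:ℝ) < 2)]
        linarith
      have hKs : K * s₀ * (s₀ + 1) < 1 := by
        nlinarith [mul_nonneg hK (le_of_lt hs₀pos)]
      have h3 : K*(A+B)*s₀ = (K * s₀ * (s₀+1)) * B := by rw [hAdef]; ring
      rw [h3]
      nlinarith
    linarith
  intro s hs
  have h1 := hBound1 s hs
  have h2 := hnn s (hsub hs)
  nlinarith [hs.1]

private lemma rpow_second_deriv (h : ContDiff ℝ 2 ψ) {m z : ℝ} (hz : 0 < ψ z) :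
    HasDerivAt (fun y => ψ y ^ m) (m * ψ z ^ (m - 1) * deriv ψ z) z ∧
    HasDerivAt (fun y => m * ψ y ^ (m - 1) * deriv ψ y)
      (deriv (deriv (fun y => ψ y ^ m)) z) z := by
  have hdiff : Differentiable ℝ ψ := h.differentiable (by norm_num)
  have hd2 : ContDiff ℝ 1 (deriv ψ) := by
    have := (contDiff_succ_iff_deriv (n := 1)).mp (by exact_mod_cast h)
    exact this.2.2
  have hVopen : IsOpen (ψ ⁻¹' (Ioi 0)) := isOpen_Ioi.preimage h.continuous
  have hzV : z ∈ ψ ⁻¹' (Ioi 0) := hz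
  have hkey : ∀ y ∈ ψ ⁻¹' (Ioi 0),
      HasDerivAt (fun y => ψ y ^ m) (m * ψ y ^ (m - 1) * deriv ψ y) y := by
    intro y hy
    have := (hdiff y).hasDerivAt.rpow_const (p := m) (Or.inl (ne_of_gt hy))
    convert this using 1
    ring
  have hfirst := hkey z hzV
  have hEeq : deriv (fun y => ψ y ^ m) =ᶠ[𝓝 z] (fun y => m * ψ y ^ (m - 1) * deriv ψ y) := by
    filter_upwards [hVopen.mem_nhds hzV] with y hy
    exact (hkey y hy).deriv
  have hEdiff : DifferentiableAt ℝ (fun y => m * ψ y ^ (m - 1) * deriv ψ y) z := by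
    have d1 : DifferentiableAt ℝ (fun y => ψ y ^ (m - 1)) z :=
      ((hdiff z).hasDerivAt.rpow_const (p := m - 1) (Or.inl (ne_of_gt hz))).differentiableAt
    have d2 : DifferentiableAt ℝ (deriv ψ) z := (hd2.differentiable (by norm_num)) z
    exact ((differentiableAt_const m).mul d1).mul d2
  refine ⟨hfirst, ?_⟩
  have heq2 : deriv (deriv (fun y => ψ y ^ m)) z
      = deriv (fun y => m * ψ y ^ (m - 1) * deriv ψ y) z := hEeq.deriv_eq
  rw [heq2]
  exact hEdiff.hasDerivAt

private lemma key_bound {m β r c b1 Z Cd δp M A B A' B' SA SB z l : ℝ}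
    (hm0 : 0 < m) (hm1 : m < 1) (hβ : 1 < β) (hr : 0 < r)
    (hb1 : 0 < b1) (hc : 0 < c)
    (hδp : 0 < δp) (hδB : δp ≤ B) (hBA : B ≤ A) (hAM : A ≤ M)
    (hCd : |B'| ≤ Cd) (hA'le : A' ≤ 0)
    (hzZ : |z| ≤ Z) (hl : 0 < l)
    (hsub' : -b1 * (B + c * z * B') ≤ SB + r * B ^ β)
    (hsup' : -b1 * (A + c * (z - l) * A') ≥ SA + r * A ^ β) :
    SA - SB ≤ (b1 * c * Z) * (((1/m) * M ^ (1-m)) * |m * A ^ (m-1) * A' - m * B ^ (m-1) * B'|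
      + (Cd * δp ^ (m-1) * ((1-m) * δp ^ (-m)) * (1/(m * M ^ (m-1)))) * (A ^ m - B ^ m)) := by
  have hBpos : 0 < B := lt_of_lt_of_le hδp hδB
  have hApos : 0 < A := lt_of_lt_of_le hBpos hBA
  have hMpos : 0 < M := lt_of_lt_of_le hApos hAM
  have hZ0 : 0 ≤ Z := le_trans (abs_nonneg z) hzZ
  have hCd0 : 0 ≤ Cd := le_trans (abs_nonneg B') hCd
  -- step 1 : SA - SB ≤ b1*c*Z * |A' - B'|
  have e3 : SA - SB ≤ (-b1 * (A + c * (z - l) * A') - r * A ^ β)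
      - (-b1 * (B + c * z * B') - r * B ^ β) := by linarith
  have e4 : (-b1 * (A + c * (z - l) * A') - r * A ^ β) - (-b1 * (B + c * z * B') - r * B ^ β)
      = -(b1*(A-B)) + (-(b1*c*z*(A'-B'))) + b1*c*l*A' + (-(r*(A^β - B^β))) := by ring
  have p1 : -(b1*(A-B)) ≤ 0 := by nlinarith
  have p2 : b1*c*l*A' ≤ 0 := by nlinarith [mul_pos (mul_pos hb1 hc) hl]
  have p3 : B ^ β ≤ A ^ β := Real.rpow_le_rpow hBpos.le hBA (by linarith)
  have p3' : -(r*(A^β - B^β)) ≤ 0 := by nlinarith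
  have p4 : -(b1*c*z*(A'-B')) ≤ b1*c*Z * |A' - B'| := by
    have h5 : -(z*(A'-B')) ≤ |z| * |A' - B'| := by
      calc -(z*(A'-B')) ≤ |z*(A'-B')| := neg_le_abs _
        _ = |z| * |A'-B'| := abs_mul _ _
    calc -(b1*c*z*(A'-B')) = (b1*c) * (-(z*(A'-B'))) := by ring
      _ ≤ (b1*c) * (|z| * |A'-B'|) := by
          apply mul_le_mul_of_nonneg_left h5 (by positivity)
      _ ≤ (b1*c) * (Z * |A'-B'|) := by
          apply mul_le_mul_of_nonneg_left
            (mul_le_mul_of_nonneg_right hzZ (abs_nonneg _)) (by positivity)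
      _ = b1*c*Z * |A'-B'| := by ring
  have e5 : SA - SB ≤ b1*c*Z * |A'-B'| := by
    rw [e4] at e3
    linarith
  -- step 2 : bound |A' - B'|
  have hA1 : A^(1-m) * A^(m-1) = 1 := by
    rw [← Real.rpow_add hApos]; norm_num
  have hB1 : B^(m-1) * B^(1-m) = 1 := by
    rw [← Real.rpow_add hBpos]; norm_num
  have h6 : m * (A' - B') = A^(1-m) * (m * A^(m-1) * A' - m * B^(m-1) * B')
      + m * B' * (B^(m-1) * (A^(1-m) - B^(1-m))) := by
    linear_combination (-(m*A')) * hA1 + (m*B') * hB1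
  have hdiffnn : 0 ≤ A^(1-m) - B^(1-m) := by
    have := Real.rpow_le_rpow hBpos.le hBA (by linarith : (0:ℝ) ≤ 1-m)
    linarith
  have hBm1pos : (0:ℝ) < B^(m-1) := Real.rpow_pos_of_pos hBpos _
  have habs : m * |A' - B'| ≤ A^(1-m) * |m * A^(m-1) * A' - m * B^(m-1) * B'|
      + m * Cd * (B^(m-1) * (A^(1-m) - B^(1-m))) := by
    have c1 : m * |A' - B'| = |m * (A' - B')| := by
      rw [abs_mul, abs_of_pos hm0]
    rw [c1, h6]
    refine le_trans (abs_add_le _ _) ?_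
    have c2 : |A^(1-m) * (m * A^(m-1) * A' - m * B^(m-1) * B')|
        = A^(1-m) * |m * A^(m-1) * A' - m * B^(m-1) * B'| := by
      rw [abs_mul, abs_of_pos (Real.rpow_pos_of_pos hApos _)]
    have c3 : |m * B' * (B^(m-1) * (A^(1-m) - B^(1-m)))|
        ≤ m * Cd * (B^(m-1) * (A^(1-m) - B^(1-m))) := by
      rw [abs_mul, abs_mul, abs_of_pos hm0,
        abs_of_nonneg (mul_nonneg hBm1pos.le hdiffnn)]
      apply mul_le_mul_of_nonneg_right _ (mul_nonneg hBm1pos.le hdiffnn)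
      exact mul_le_mul_of_nonneg_left hCd hm0.le
    linarith [c2 ▸ le_refl (A^(1-m) * |m * A^(m-1) * A' - m * B^(m-1) * B'|)]
  -- step 3 : assemble
  have hmne : m ≠ 0 := ne_of_gt hm0
  have hMm1pos : (0:ℝ) < M ^ (m-1) := Real.rpow_pos_of_pos hMpos _
  have hmM : (0:ℝ) < m * M ^ (m-1) := by positivity
  have b1' : A^(1-m) ≤ M^(1-m) := Real.rpow_le_rpow hApos.le hAM (by linarith)
  have b2' : B^(m-1) ≤ δp^(m-1) := Real.rpow_le_rpow_of_nonpos hδp hδB (by linarith)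
  have b3 : A^(1-m) - B^(1-m) ≤ (1-m) * δp^((1-m)-1) * (A-B) :=
    mvt_rpow_upper (by linarith) (by linarith) hδp hδB hBA
  have b3' : A^(1-m) - B^(1-m) ≤ (1-m) * δp^(-m) * (A-B) := by
    rw [show ((1-m)-1 : ℝ) = -m by ring] at b3
    exact b3
  have b4 : m * M^(m-1) * (A - B) ≤ A^m - B^m :=
    mvt_rpow_lower hm0 (le_of_lt hm1) hBpos hBA hAM
  have b5 : A - B ≤ (1/(m * M^(m-1))) * (A^m - B^m) := by
    rw [one_div, inv_mul_eq_div, le_div_iff₀ hmM]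
    linarith
  have hu0nn : (0:ℝ) ≤ A^m - B^m := by
    have := Real.rpow_le_rpow hBpos.le hBA hm0.le
    linarith
  have hAB0 : (0:ℝ) ≤ A - B := by linarith
  have hδpm : (0:ℝ) < δp ^ (m-1) := Real.rpow_pos_of_pos hδp _
  have hδpm2 : (0:ℝ) < δp ^ (-m) := Real.rpow_pos_of_pos hδp _
  -- chain : B^(m-1) * (A^(1-m)-B^(1-m)) ≤ δp^(m-1) * ((1-m)*δp^(-m) * ((1/(m*M^(m-1))) * (A^m - B^m)))
  have chain1 : B^(m-1) * (A^(1-m) - B^(1-m)) ≤ δp^(m-1) * ((1-m) * δp^(-m) * (A-B)) := by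
    exact mul_le_mul b2' b3' hdiffnn hδpm.le
  have chain2 : δp^(m-1) * ((1-m) * δp^(-m) * (A-B))
      ≤ δp^(m-1) * ((1-m) * δp^(-m) * ((1/(m * M^(m-1))) * (A^m - B^m))) := by
    apply mul_le_mul_of_nonneg_left _ hδpm.le
    exact mul_le_mul_of_nonneg_left b5 (mul_nonneg (by linarith) hδpm2.le)
  have hm_ineq : m * |A' - B'| ≤ M^(1-m) * |m * A^(m-1) * A' - m * B^(m-1) * B'|
      + m * Cd * (δp^(m-1) * ((1-m) * δp^(-m) * ((1/(m * M^(m-1))) * (A^m - B^m)))) := by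
    have t1 : A^(1-m) * |m * A^(m-1) * A' - m * B^(m-1) * B'|
        ≤ M^(1-m) * |m * A^(m-1) * A' - m * B^(m-1) * B'| :=
      mul_le_mul_of_nonneg_right b1' (abs_nonneg _)
    have t2 : m * Cd * (B^(m-1) * (A^(1-m) - B^(1-m)))
        ≤ m * Cd * (δp^(m-1) * ((1-m) * δp^(-m) * ((1/(m * M^(m-1))) * (A^m - B^m)))) := by
      apply mul_le_mul_of_nonneg_left _ (by positivity)
      exact le_trans chain1 chain2
    linarith
  have hfin : |A' - B'| ≤ ((1/m) * M^(1-m)) * |m * A^(m-1) * A' - m * B^(m-1) * B'|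
      + (Cd * δp^(m-1) * ((1-m) * δp^(-m)) * (1/(m * M^(m-1)))) * (A^m - B^m) := by
    have e6 : |A' - B'| = (1/m) * (m * |A' - B'|) := by field_simp
    rw [e6]
    refine le_trans (mul_le_mul_of_nonneg_left hm_ineq (by positivity)) (le_of_eq ?_)
    field_simp
  calc SA - SB ≤ b1*c*Z * |A'-B'| := e5
    _ ≤ (b1*c*Z) * (((1/m) * M^(1-m)) * |m * A^(m-1) * A' - m * B^(m-1) * B'|
        + (Cd * δp^(m-1) * ((1-m) * δp^(-m)) * (1/(m * M^(m-1)))) * (A^m - B^m)) :=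
      mul_le_mul_of_nonneg_left hfin (by positivity)
    _ = (b1 * c * Z) * (((1/m) * M ^ (1-m)) * |m * A ^ (m-1) * A' - m * B ^ (m-1) * B'|
        + (Cd * δp ^ (m-1) * ((1-m) * δp ^ (-m)) * (1/(m * M ^ (m-1)))) * (A ^ m - B ^ m)) := by ring

end helpers

theorem comparison_principle_sub_super
    (m β r : ℝ) (hm0 : 0 < m) (hm1 : m < 1) (hβ : 1 < β) (hr : 0 < r)
    (I : Set ℝ) (hI : I.OrdConnected)
    (ψ₁ ψ₂ : ℝ → ℝ) (h1 : ContDiff ℝ 2 ψ₁) (h2 : ContDiff ℝ 2 ψ₂)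
    (hpos1 : ∀ z ∈ I, 0 < ψ₁ z) (hpos2 : ∀ z ∈ I, 0 < ψ₂ z)
    (hdec1 : StrictAntiOn ψ₁ I) (hdec2 : StrictAntiOn ψ₂ I)
    (hsub : ∀ z ∈ I, -(1/(β-1)) * (ψ₁ z + ((β - m)/2) * z * deriv ψ₁ z)
      ≤ deriv (deriv (fun y => ψ₁ y ^ m)) z + r * ψ₁ z ^ β)
    (hsup : ∀ z ∈ I, -(1/(β-1)) * (ψ₂ z + ((β - m)/2) * z * deriv ψ₂ z)
      ≥ deriv (deriv (fun y => ψ₂ y ^ m)) z + r * ψ₂ z ^ β)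
    (z₁ : ℝ) (hz₁ : z₁ ∈ I) (heq : ψ₁ z₁ = ψ₂ z₁)
    (hslope : deriv ψ₁ z₁ > deriv ψ₂ z₁) :
    ∀ z ∈ Ioi z₁ ∩ I, ψ₁ z > ψ₂ z := by
  intro z₂ hz₂
  by_contra hcon
  push_neg at hcon
  obtain ⟨hz₂gt, hz₂I⟩ := hz₂
  rw [mem_Ioi] at hz₂gt
  have hJ : Icc z₁ z₂ ⊆ I := hI.out hz₁ hz₂I
  have hdiff1 : Differentiable ℝ ψ₁ := h1.differentiable (by norm_num)
  have hdiff2 : Differentiable ℝ ψ₂ := h2.differentiable (by norm_num)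
  set c := (β - m)/2 with hcdef
  set b1 := 1/(β-1) with hb1def
  have hb1 : 0 < b1 := by
    rw [hb1def]
    have : (0:ℝ) < β - 1 := by linarith
    positivity
  have hc : 0 < c := by rw [hcdef]; linarith
  -- Step A : a point in (z₁, z₂) where ψ₁ > ψ₂
  obtain ⟨z', hz'mem, hz'pos⟩ :=
    exists_gt_right (w := fun z => ψ₁ z - ψ₂ z)
      ((hdiff1 z₁).hasDerivAt.sub (hdiff2 z₁).hasDerivAt)
      (by simp [heq]) (by linarith) hz₂gt
  have hz'lt : ψ₂ z' < ψ₁ z' := by linarith [hz'pos]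
  -- bounds
  have hanti1 : AntitoneOn ψ₁ (Icc z₁ z₂) := (hdec1.mono hJ).antitoneOn
  have hanti2 : AntitoneOn ψ₂ (Icc z₁ z₂) := (hdec2.mono hJ).antitoneOn
  set δp := min (ψ₁ z₂) (ψ₂ z₂) with hδpdef
  have hδp : 0 < δp := lt_min (hpos1 z₂ hz₂I) (hpos2 z₂ hz₂I)
  set M := max (ψ₁ z₁) (ψ₂ z₁) with hMdef
  have hM : 0 < M := lt_max_of_lt_left (hpos1 z₁ hz₁)
  have hlow1 : ∀ z ∈ Icc z₁ z₂, δp ≤ ψ₁ z := fun z hz =>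
    le_trans (min_le_left _ _) (hanti1 hz (right_mem_Icc.mpr (le_of_lt hz₂gt)) hz.2)
  have hlow2 : ∀ z ∈ Icc z₁ z₂, δp ≤ ψ₂ z := fun z hz =>
    le_trans (min_le_right _ _) (hanti2 hz (right_mem_Icc.mpr (le_of_lt hz₂gt)) hz.2)
  have hup1 : ∀ z ∈ Icc z₁ z₂, ψ₁ z ≤ M := fun z hz =>
    le_trans (hanti1 (left_mem_Icc.mpr (le_of_lt hz₂gt)) hz hz.1) (le_max_left _ _)
  have hup2 : ∀ z ∈ Icc z₁ z₂, ψ₂ z ≤ M := fun z hz =>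
    le_trans (hanti2 (left_mem_Icc.mpr (le_of_lt hz₂gt)) hz hz.1) (le_max_right _ _)
  -- deriv ψ₂ nonpositive on Ico z₁ z₂
  have hd2nonpos : ∀ x ∈ Ico z₁ z₂, deriv ψ₂ x ≤ 0 := by
    intro x hx
    refine deriv_nonpos_aux (hdiff2 x) hx.2 (fun y hy => ?_)
    exact hdec2 (hJ ⟨hx.1, le_of_lt hx.2⟩) (hJ ⟨le_trans hx.1 (le_of_lt hy.1), hy.2⟩) hy.1
  -- the sliding family
  set Λ := z₂ - z₁ with hΛdef
  have hΛpos : 0 < Λ := by rw [hΛdef]; linarith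
  set G := {l ∈ Icc (0:ℝ) Λ | ∀ z ∈ Icc z₁ z₂, ψ₁ z ≤ ψ₂ (max (z - l) z₁)} with hGdef
  have hGclosed : IsClosed G := by
    have : G = Icc (0:ℝ) Λ ∩ ⋂ z ∈ Icc z₁ z₂, {l : ℝ | ψ₁ z ≤ ψ₂ (max (z - l) z₁)} := by
      ext l
      simp only [hGdef, mem_sep_iff, mem_inter_iff, mem_iInter, mem_setOf_eq]
    rw [this]
    refine isClosed_Icc.inter (isClosed_biInter (fun z hz => ?_))
    exact isClosed_le continuous_const
      (h2.continuous.comp (((continuous_const.sub continuous_id).max continuous_const)))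
  have hΛG : Λ ∈ G := by
    refine ⟨⟨le_of_lt hΛpos, le_rfl⟩, fun z hz => ?_⟩
    have h1' : z - Λ ≤ z₁ := by rw [hΛdef]; linarith [hz.2]
    rw [max_eq_right h1', ← heq]
    exact hanti1 (left_mem_Icc.mpr (le_of_lt hz₂gt)) hz hz.1
  have hGne : G.Nonempty := ⟨Λ, hΛG⟩
  have hGbdd : BddBelow G := ⟨0, fun x hx => hx.1.1⟩
  set l₀ := sInf G with hl₀def
  have hl₀G : l₀ ∈ G := hGclosed.csInf_mem hGne hGbdd
  obtain ⟨hl₀mem, hgood⟩ := hl₀G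
  have hl₀pos : 0 < l₀ := by
    rcases eq_or_lt_of_le hl₀mem.1 with h | h
    · exfalso
      have := hgood z' ⟨le_of_lt hz'mem.1, le_of_lt hz'mem.2⟩
      rw [← h, sub_zero, max_eq_left (le_of_lt hz'mem.1)] at this
      linarith
    · exact h
  have hl₀Λ : l₀ ≤ Λ := hl₀mem.2
  -- touching set
  set T := {z ∈ Icc (z₁ + l₀) z₂ | ψ₁ z = ψ₂ (z - l₀)} with hTdef
  have hTclosed : IsClosed T := by
    have : T = Icc (z₁ + l₀) z₂ ∩ {z : ℝ | ψ₁ z = ψ₂ (z - l₀)} := rfl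
    rw [this]
    exact isClosed_Icc.inter (isClosed_eq h1.continuous
      (h2.continuous.comp (continuous_id.sub continuous_const)))
  have hTne : T.Nonempty := by
    by_contra hT
    rw [not_nonempty_iff_eq_empty] at hT
    have hstrictall : ∀ z ∈ Icc (z₁ + l₀) z₂, ψ₁ z < ψ₂ (z - l₀) := by
      intro z hz
      have hle : ψ₁ z ≤ ψ₂ (z - l₀) := by
        have := hgood z ⟨by linarith [hz.1, hl₀pos], hz.2⟩
        rwa [max_eq_left (by linarith [hz.1])] at this
      rcases eq_or_lt_of_le hle with h | h
      · exfalso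
        have : z ∈ T := ⟨hz, h⟩
        rw [hT] at this
        exact this
      · exact h
    -- min of the gap on K' = Icc (z₁ + l₀/2) z₂
    have hK'ne : (Icc (z₁ + l₀/2) z₂).Nonempty := nonempty_Icc.mpr (by
      have := hl₀Λ; rw [hΛdef] at this; linarith)
    have hfc : ContinuousOn (fun z => ψ₂ (max (z - l₀) z₁) - ψ₁ z) (Icc (z₁ + l₀/2) z₂) :=
      ((h2.continuous.comp ((continuous_id.sub continuous_const).max continuous_const)).sub
        h1.continuous).continuousOn
    obtain ⟨zm, hzm, hzmin⟩ := isCompact_Icc.exists_isMinOn hK'ne hfc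
    set δ₀ := ψ₂ (max (zm - l₀) z₁) - ψ₁ zm with hδ₀def
    have hδ₀pos : 0 < δ₀ := by
      rw [hδ₀def]
      rcases le_or_gt (z₁ + l₀) zm with h | h
      · rw [max_eq_left (by linarith [hzm.1])]
        linarith [hstrictall zm ⟨h, hzm.2⟩]
      · rw [max_eq_right (by linarith)]
        rw [← heq]
        have : ψ₁ zm < ψ₁ z₁ := hdec1 hz₁ (hJ ⟨by linarith [hzm.1, hl₀pos], hzm.2⟩)
          (by linarith [hzm.1, hl₀pos])
        linarith
    -- uniform continuity of ψ₂ on Icc z₁ z₂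
    have hUC : UniformContinuousOn ψ₂ (Icc z₁ z₂) :=
      isCompact_Icc.uniformContinuousOn_of_continuous h2.continuous.continuousOn
    rw [Metric.uniformContinuousOn_iff] at hUC
    obtain ⟨η, hη, hηp⟩ := hUC δ₀ hδ₀pos
    set ε := min (l₀/2) (η/2) with hεdef
    have hεpos : 0 < ε := lt_min (by linarith) (by linarith)
    have hεl : ε ≤ l₀/2 := min_le_left _ _
    have hεη : ε < η := lt_of_le_of_lt (min_le_right _ _) (by linarith)
    have hmemG : l₀ - ε ∈ G := by
      refine ⟨⟨by linarith, by linarith⟩, fun z hz => ?_⟩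
      rcases le_or_gt z (z₁ + (l₀ - ε)) with h | h
      · rw [max_eq_right (by linarith), ← heq]
        exact hanti1 (left_mem_Icc.mpr (le_of_lt hz₂gt)) hz hz.1
      · have hzK' : z ∈ Icc (z₁ + l₀/2) z₂ := ⟨by linarith, hz.2⟩
        have hgap : δ₀ ≤ ψ₂ (max (z - l₀) z₁) - ψ₁ z := hzmin hzK'
        have ha : max (z - (l₀ - ε)) z₁ ∈ Icc z₁ z₂ :=
          ⟨le_max_right _ _, max_le (by linarith [hz.2]) (by linarith [hz.1])⟩
        have hb : max (z - l₀) z₁ ∈ Icc z₁ z₂ :=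
          ⟨le_max_right _ _, max_le (by linarith [hz.2]) (by linarith [hz.1])⟩
        have hdist : dist (max (z - (l₀ - ε)) z₁) (max (z - l₀) z₁) < η := by
          rw [Real.dist_eq]
          calc |max (z - (l₀ - ε)) z₁ - max (z - l₀) z₁| ≤ |(z - (l₀ - ε)) - (z - l₀)| :=
                abs_max_sub_max_le_abs _ _ _
            _ = ε := by rw [show (z - (l₀ - ε)) - (z - l₀) = ε by ring, abs_of_pos hεpos]
            _ < η := hεη
        have := hηp _ ha _ hb hdist
        rw [Real.dist_eq, abs_lt] at this
        linarith
    have : l₀ ≤ l₀ - ε := csInf_le hGbdd hmemG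
    linarith
  set ζ := sInf T with hζdef
  have hζT : ζ ∈ T := hTclosed.csInf_mem hTne ⟨z₁ + l₀, fun x hx => hx.1.1⟩
  obtain ⟨hζmem, hζeq⟩ := hζT
  have hζgt : z₁ + l₀ < ζ := by
    rcases eq_or_lt_of_le hζmem.1 with h | h
    · exfalso
      have e1 : ψ₁ (z₁ + l₀) = ψ₂ (z₁ + l₀ - l₀) := by rw [h]; exact hζeq
      rw [add_sub_cancel_right] at e1
      have hmem' : z₁ + l₀ ∈ I := hJ ⟨by linarith, by rw [h]; exact hζmem.2⟩
      have e2 : ψ₁ (z₁ + l₀) < ψ₁ z₁ := hdec1 hz₁ hmem' (by linarith)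
      rw [e1, ← heq] at e2
      linarith
    · exact h
  
  have hζlt : ζ < z₂ := by
    rcases eq_or_lt_of_le hζmem.2 with h | h
    · exfalso
      rw [h] at hζeq
      have hm1' : z₂ - l₀ ∈ I := hJ ⟨by linarith [hΛdef], by linarith⟩
      have e2 : ψ₂ z₂ < ψ₂ (z₂ - l₀) := hdec2 hm1' hz₂I (by linarith)
      linarith [hζeq, hcon]
    · exact h
  have hstrict : ∀ z ∈ Ico (z₁ + l₀) ζ, ψ₁ z < ψ₂ (z - l₀) := by
    intro z hz
    have hzIcc : z ∈ Icc (z₁ + l₀) z₂ := ⟨hz.1, le_trans (le_of_lt hz.2) hζmem.2⟩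
    have hle : ψ₁ z ≤ ψ₂ (z - l₀) := by
      have := hgood z ⟨by linarith [hz.1], hzIcc.2⟩
      rwa [max_eq_left (by linarith [hz.1])] at this
    rcases eq_or_lt_of_le hle with h | h
    · exfalso
      have : ζ ≤ z := csInf_le ⟨z₁ + l₀, fun x hx => hx.1.1⟩ ⟨hzIcc, h⟩
      linarith [hz.2]
    · exact h
  -- memberships
  have hmem1 : ∀ z ∈ Icc (z₁ + l₀) z₂, z ∈ Icc z₁ z₂ := fun z hz =>
    ⟨by linarith [hz.1], hz.2⟩
  have hmem2 : ∀ z ∈ Icc (z₁ + l₀) z₂, z - l₀ ∈ Icc z₁ z₂ := fun z hz =>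
    ⟨by linarith [hz.1], by linarith [hz.2]⟩
  have hps1 : ∀ z ∈ Icc (z₁ + l₀) z₂, 0 < ψ₁ z := fun z hz => hpos1 z (hJ (hmem1 z hz))
  have hps2 : ∀ z ∈ Icc (z₁ + l₀) z₂, 0 < ψ₂ (z - l₀) := fun z hz => hpos2 _ (hJ (hmem2 z hz))
  have hBAfun : ∀ z ∈ Icc (z₁ + l₀) z₂, ψ₁ z ≤ ψ₂ (z - l₀) := by
    intro z hz
    have := hgood z ⟨by linarith [hz.1], hz.2⟩
    rwa [max_eq_left (by linarith [hz.1])] at this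
  -- constants
  obtain ⟨C1, hC1b⟩ := isCompact_Icc.exists_bound_of_continuousOn (s := Icc z₁ z₂)
    ((h1.continuous_deriv (by norm_num)).continuousOn)
  obtain ⟨C2, hC2b⟩ := isCompact_Icc.exists_bound_of_continuousOn (s := Icc z₁ z₂)
    ((h2.continuous_deriv (by norm_num)).continuousOn)
  set Cd := max C1 C2 with hCddef
  have hCd1 : ∀ y ∈ Icc z₁ z₂, |deriv ψ₁ y| ≤ Cd := fun y hy =>
    le_trans (by simpa using hC1b y hy) (le_max_left _ _)
  have hCd2 : ∀ y ∈ Icc z₁ z₂, |deriv ψ₂ y| ≤ Cd := fun y hy =>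
    le_trans (by simpa using hC2b y hy) (le_max_right _ _)
  set Zb := max |z₁| |z₂| with hZdef
  have hZb : ∀ z ∈ Icc z₁ z₂, |z| ≤ Zb := fun z hz => abs_le_max_abs_abs hz.1 hz.2
  have hCd0 : 0 ≤ Cd := le_trans (abs_nonneg _) (hCd1 z₁ (left_mem_Icc.mpr (le_of_lt hz₂gt)))
  have hZ0 : 0 ≤ Zb := le_trans (abs_nonneg z₁) (le_max_left _ _)
  have h1m : (0:ℝ) ≤ 1 - m := by linarith
  have hq₁ : (0:ℝ) ≤ (1/m) * M^(1-m) := by positivity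
  have hq₂ : (0:ℝ) ≤ Cd * δp^(m-1) * ((1-m) * δp^(-m)) * (1/(m * M^(m-1))) := by positivity
  set K := (b1 * c * Zb) * (((1/m) * M^(1-m))
    + (Cd * δp^(m-1) * ((1-m) * δp^(-m)) * (1/(m * M^(m-1))))) with hKdef
  have hK0 : 0 ≤ K := by
    rw [hKdef]
    exact mul_nonneg (by positivity) (by linarith)
  -- pointwise differential inequality
  have hkey : ∀ z ∈ Icc (z₁ + l₀) z₂,
      deriv (deriv (fun y => ψ₂ y ^ m)) (z - l₀) - deriv (deriv (fun y => ψ₁ y ^ m)) z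
        ≤ K * ((ψ₂ (z - l₀) ^ m - ψ₁ z ^ m)
            + |m * ψ₂ (z - l₀) ^ (m-1) * deriv ψ₂ (z - l₀)
               - m * ψ₁ z ^ (m-1) * deriv ψ₁ z|) := by
    intro z hz
    have hzJ := hmem1 z hz
    have hzlJ := hmem2 z hz
    have hzI := hJ hzJ
    have hzlI := hJ hzlJ
    have hBA := hBAfun z hz
    have hA'le : deriv ψ₂ (z - l₀) ≤ 0 := hd2nonpos _ ⟨hzlJ.1, by linarith [hz.2]⟩
    have hkb := key_bound (m := m) (β := β) (r := r) (c := c) (b1 := b1) (Z := Zb) (Cd := Cd)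
      (δp := δp) (M := M) (A := ψ₂ (z - l₀)) (B := ψ₁ z) (A' := deriv ψ₂ (z - l₀))
      (B' := deriv ψ₁ z) (SA := deriv (deriv (fun y => ψ₂ y ^ m)) (z - l₀))
      (SB := deriv (deriv (fun y => ψ₁ y ^ m)) z) (z := z) (l := l₀)
      hm0 hm1 hβ hr hb1 hc hδp (hlow1 z hzJ) hBA (hup2 _ hzlJ)
      (hCd1 z hzJ) hA'le (hZb z hzJ) hl₀pos (hsub z hzI) (hsup (z - l₀) hzlI)
    have hu0nn : 0 ≤ ψ₂ (z - l₀) ^ m - ψ₁ z ^ m := by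
      have := Real.rpow_le_rpow (hps1 z hz).le hBA hm0.le
      linarith
    have e7 : 0 ≤ (b1 * c * Zb) * ((Cd * δp^(m-1) * ((1-m) * δp^(-m)) * (1/(m * M^(m-1))))
        * |m * ψ₂ (z - l₀) ^ (m-1) * deriv ψ₂ (z - l₀) - m * ψ₁ z ^ (m-1) * deriv ψ₁ z|
        + ((1/m) * M^(1-m)) * (ψ₂ (z - l₀) ^ m - ψ₁ z ^ m)) := by
      exact mul_nonneg (by positivity)
        (add_nonneg (mul_nonneg hq₂ (abs_nonneg _)) (mul_nonneg hq₁ hu0nn))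
    have e8 : K * ((ψ₂ (z - l₀) ^ m - ψ₁ z ^ m)
          + |m * ψ₂ (z - l₀) ^ (m-1) * deriv ψ₂ (z - l₀) - m * ψ₁ z ^ (m-1) * deriv ψ₁ z|)
        = (b1 * c * Zb) * (((1/m) * M ^ (1-m))
            * |m * ψ₂ (z - l₀) ^ (m-1) * deriv ψ₂ (z - l₀) - m * ψ₁ z ^ (m-1) * deriv ψ₁ z|
          + (Cd * δp ^ (m-1) * ((1-m) * δp ^ (-m)) * (1/(m * M ^ (m-1))))
            * (ψ₂ (z - l₀) ^ m - ψ₁ z ^ m))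
        + (b1 * c * Zb) * ((Cd * δp^(m-1) * ((1-m) * δp^(-m)) * (1/(m * M^(m-1))))
            * |m * ψ₂ (z - l₀) ^ (m-1) * deriv ψ₂ (z - l₀) - m * ψ₁ z ^ (m-1) * deriv ψ₁ z|
          + ((1/m) * M^(1-m)) * (ψ₂ (z - l₀) ^ m - ψ₁ z ^ m)) := by
      rw [hKdef]; ring
    linarith [hkb, e7, e8.ge, e8.le]
  -- derivatives of the comparison function
  have hDer : ∀ z ∈ Icc (z₁ + l₀) z₂,
      HasDerivAt (fun y => ψ₂ (y - l₀) ^ m - ψ₁ y ^ m)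
        (m * ψ₂ (z - l₀) ^ (m-1) * deriv ψ₂ (z - l₀) - m * ψ₁ z ^ (m-1) * deriv ψ₁ z) z ∧
      HasDerivAt (fun y => m * ψ₂ (y - l₀) ^ (m-1) * deriv ψ₂ (y - l₀)
          - m * ψ₁ y ^ (m-1) * deriv ψ₁ y)
        (deriv (deriv (fun y => ψ₂ y ^ m)) (z - l₀)
          - deriv (deriv (fun y => ψ₁ y ^ m)) z) z := by
    intro z hz
    obtain ⟨hA1, hA2⟩ := rpow_second_deriv h2 (m := m) (hps2 z hz)
    obtain ⟨hB1, hB2⟩ := rpow_second_deriv h1 (m := m) (hps1 z hz)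
    have htr : HasDerivAt (fun y : ℝ => y - l₀) 1 z := (hasDerivAt_id z).sub_const l₀
    have hC1 : HasDerivAt (fun y => ψ₂ (y - l₀) ^ m)
        (m * ψ₂ (z - l₀) ^ (m-1) * deriv ψ₂ (z - l₀)) z := by
      have := HasDerivAt.comp z hA1 htr
      simpa [Function.comp_def] using this
    have hC2 : HasDerivAt (fun y => m * ψ₂ (y - l₀) ^ (m-1) * deriv ψ₂ (y - l₀))
        (deriv (deriv (fun y => ψ₂ y ^ m)) (z - l₀)) z := by
      have := HasDerivAt.comp z hA2 htr
      simpa [Function.comp_def] using this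
    exact ⟨hC1.sub hB1, hC2.sub hB2⟩
  -- nonnegativity
  have hunn : ∀ z ∈ Icc (z₁ + l₀) z₂, 0 ≤ ψ₂ (z - l₀) ^ m - ψ₁ z ^ m := by
    intro z hz
    have := Real.rpow_le_rpow (hps1 z hz).le (hBAfun z hz) hm0.le
    linarith
  have huζ : ψ₂ (ζ - l₀) ^ m - ψ₁ ζ ^ m = 0 := by rw [hζeq]; ring
  have hlocmin : IsLocalMin (fun y => ψ₂ (y - l₀) ^ m - ψ₁ y ^ m) ζ := by
    have hmem : Ioo (z₁ + l₀) z₂ ∈ 𝓝 ζ := Ioo_mem_nhds hζgt hζlt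
    have : ∀ᶠ y in 𝓝 ζ, (fun y => ψ₂ (y - l₀) ^ m - ψ₁ y ^ m) ζ
        ≤ (fun y => ψ₂ (y - l₀) ^ m - ψ₁ y ^ m) y := by
      filter_upwards [hmem] with y hy
      rw [huζ]
      exact hunn y ⟨le_of_lt hy.1, le_of_lt hy.2⟩
    exact this
  have hDuζ : m * ψ₂ (ζ - l₀) ^ (m-1) * deriv ψ₂ (ζ - l₀)
      - m * ψ₁ ζ ^ (m-1) * deriv ψ₁ ζ = 0 := by
    have hd0 := hlocmin.deriv_eq_zero
    rwa [(hDer ζ hζmem).1.deriv] at hd0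
  -- apply the Hopf-type lemma going leftwards from ζ
  set δb := ζ - (z₁ + l₀) with hδbdef
  have hδbpos : 0 < δb := by rw [hδbdef]; linarith
  have hmemrev : ∀ s ∈ Icc (0:ℝ) δb, ζ - s ∈ Icc (z₁ + l₀) z₂ := by
    intro s hs
    constructor
    · have := hs.2; rw [hδbdef] at this; linarith
    · linarith [hs.1, hζmem.2]
  have happ := hopf_lemma (K := K) (δ := δb) hK0 hδbpos
    (u := fun s => ψ₂ (ζ - s - l₀) ^ m - ψ₁ (ζ - s) ^ m)
    (u' := fun s => -(m * ψ₂ (ζ - s - l₀) ^ (m-1) * deriv ψ₂ (ζ - s - l₀)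
        - m * ψ₁ (ζ - s) ^ (m-1) * deriv ψ₁ (ζ - s)))
    (u'' := fun s => deriv (deriv (fun y => ψ₂ y ^ m)) (ζ - s - l₀)
        - deriv (deriv (fun y => ψ₁ y ^ m)) (ζ - s))
    (fun s hs => by
      have hinner : HasDerivAt (fun t : ℝ => ζ - t) (-1) s := (hasDerivAt_id s).const_sub ζ
      have := HasDerivAt.comp s (hDer (ζ - s) (hmemrev s hs)).1 hinner
      simpa [Function.comp_def, mul_neg_one] using this)
    (fun s hs => by
      have hinner : HasDerivAt (fun t : ℝ => ζ - t) (-1) s := (hasDerivAt_id s).const_sub ζ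
      have h' := HasDerivAt.comp s (hDer (ζ - s) (hmemrev s hs)).2 hinner
      have h'' := h'.neg
      simpa [Function.comp_def, mul_neg_one, Pi.neg_def] using h'')
    (fun s hs => hunn (ζ - s) (hmemrev s hs))
    (by simpa using huζ)
    (by simp only [sub_zero, hDuζ, neg_zero])
    (fun s hs => by
      have hk := hkey (ζ - s) (hmemrev s hs)
      show deriv (deriv (fun y => ψ₂ y ^ m)) (ζ - s - l₀)
          - deriv (deriv (fun y => ψ₁ y ^ m)) (ζ - s)
        ≤ K * ((ψ₂ (ζ - s - l₀) ^ m - ψ₁ (ζ - s) ^ m)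
            + |-(m * ψ₂ (ζ - s - l₀) ^ (m-1) * deriv ψ₂ (ζ - s - l₀)
               - m * ψ₁ (ζ - s) ^ (m-1) * deriv ψ₁ (ζ - s))|)
      rw [abs_neg]
      exact hk)
  obtain ⟨s₀, hs₀pos, hs₀⟩ := happ
  set s' := min s₀ δb with hs'def
  have hs'pos : 0 < s' := lt_min hs₀pos hδbpos
  have hval : ψ₂ (ζ - s' - l₀) ^ m - ψ₁ (ζ - s') ^ m = 0 :=
    hs₀ s' ⟨le_of_lt hs'pos, min_le_left _ _⟩
  have hs'δb : s' ≤ δb := min_le_right _ _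
  have hmemIco : ζ - s' ∈ Ico (z₁ + l₀) ζ := by
    constructor
    · rw [hδbdef] at hs'δb; linarith
    · linarith
  have hstrict' : ψ₁ (ζ - s') < ψ₂ (ζ - s' - l₀) := hstrict (ζ - s') hmemIco
  have hpow : ψ₁ (ζ - s') ^ m < ψ₂ (ζ - s' - l₀) ^ m :=
    Real.rpow_lt_rpow (hps1 (ζ - s') ⟨hmemIco.1, by linarith [hmemIco.2, hζmem.2]⟩).le
      hstrict' hm0
  linarith
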